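/- Let η ∈ (0,1) and N > 0, and set L₁ = log₂(1 + 1/((1−η)N)) and L₂ = log₂(1 + 1/N). The variance of the random variable k L₁ − n L₂ under the joint photon-number distribution p equals (1−η)N((1−η)N+1) L₁² − 2(1−η)N(N+1) L₁ L₂ + N(N+1) L₂²; that is, ∑_{n,k} p(n,k)(k L₁ − n L₂)² − (∑_{n,k} p(n,k)(k L₁ − n L₂))² equals the displayed three-term expression, with all series converging. -/

import Mathlib

open Real

/-- The joint photon-number distribution
`p(n,k) = (1/(N+1)) (N/(N+1))^n C(n,k) (1−η)^k η^{n−k}` (it vanishes for `k > n`,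
since then `C(n,k) = 0`). -/
noncomputable def jointDist (η N : ℝ) (n k : ℕ) : ℝ :=
  (1 / (N + 1)) * (N / (N + 1)) ^ n * (n.choose k : ℝ) * (1 - η) ^ k * η ^ (n - k)

lemma bern0 (x : ℝ) (n : ℕ) :
    ∑ k ∈ Finset.range (n + 1), (n.choose k : ℝ) * x ^ k * (1 - x) ^ (n - k) = 1 := by
  have h := bernsteinPolynomial.sum ℝ n
  have := congrArg (Polynomial.eval x) h
  simpa [Polynomial.eval_finset_sum, bernsteinPolynomial] using this

lemma bern1 (x : ℝ) (n : ℕ) :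
    ∑ k ∈ Finset.range (n + 1), (k : ℝ) * ((n.choose k : ℝ) * x ^ k * (1 - x) ^ (n - k))
      = n * x := by
  have h := bernsteinPolynomial.sum_smul ℝ n
  have := congrArg (Polynomial.eval x) h
  simpa [Polynomial.eval_finset_sum, bernsteinPolynomial, mul_assoc, mul_comm,
    mul_left_comm] using this

lemma bern2 (x : ℝ) (n : ℕ) :
    ∑ k ∈ Finset.range (n + 1),
        ((k * (k - 1) : ℕ) : ℝ) * ((n.choose k : ℝ) * x ^ k * (1 - x) ^ (n - k))
      = (n * (n - 1) : ℕ) * x ^ 2 := by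
  have h := bernsteinPolynomial.sum_mul_smul ℝ n
  have := congrArg (Polynomial.eval x) h
  simpa [Polynomial.eval_finset_sum, bernsteinPolynomial, mul_assoc, mul_comm,
    mul_left_comm] using this

lemma natcast_mul_pred (k : ℕ) : ((k * (k - 1) : ℕ) : ℝ) = (k : ℝ) ^ 2 - k := by
  cases k with
  | zero => simp
  | succ m => push_cast [Nat.succ_sub_one]; ring

lemma bernsq (x : ℝ) (n : ℕ) :
    ∑ k ∈ Finset.range (n + 1), (k : ℝ) ^ 2 * ((n.choose k : ℝ) * x ^ k * (1 - x) ^ (n - k))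
      = ((n : ℝ) ^ 2 - n) * x ^ 2 + n * x := by
  have e : ∀ k ∈ Finset.range (n + 1),
      (k : ℝ) ^ 2 * ((n.choose k : ℝ) * x ^ k * (1 - x) ^ (n - k))
        = ((k * (k - 1) : ℕ) : ℝ) * ((n.choose k : ℝ) * x ^ k * (1 - x) ^ (n - k))
          + (k : ℝ) * ((n.choose k : ℝ) * x ^ k * (1 - x) ^ (n - k)) := by
    intro k _
    rw [natcast_mul_pred]; ring
  rw [Finset.sum_congr rfl e, Finset.sum_add_distrib, bern2, bern1, natcast_mul_pred]

lemma tsum_sq_geom {r : ℝ} (h : |r| < 1) :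
    ∑' n : ℕ, (n : ℝ) ^ 2 * r ^ n = r * (1 + r) / (1 - r) ^ 3 := by
  have hr : ‖r‖ < 1 := by rwa [Real.norm_eq_abs]
  have hs2 : Summable fun n : ℕ => (n : ℝ) ^ 2 * r ^ n :=
    summable_pow_mul_geometric_of_norm_lt_one 2 hr
  have hs1 : Summable fun n : ℕ => (n : ℝ) * r ^ n := by
    simpa using summable_pow_mul_geometric_of_norm_lt_one 1 hr
  have hs0 : Summable fun n : ℕ => r ^ n := summable_geometric_of_norm_lt_one hr
  have hne : (1 : ℝ) - r ≠ 0 := by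
    intro hc
    have : r = 1 := by linarith
    rw [this] at h; norm_num at h
  have h1' : (∑' n : ℕ, (n : ℝ) * r ^ n) * (1 - r) ^ 2 = r := by
    rw [tsum_coe_mul_geometric_of_norm_lt_one hr]; field_simp
  have h0' : (∑' n : ℕ, r ^ n) * (1 - r) = 1 := by
    rw [tsum_geometric_of_norm_lt_one hr]; field_simp
  have key : (∑' n : ℕ, (n : ℝ) ^ 2 * r ^ n) =
      r * (∑' n : ℕ, (n : ℝ) ^ 2 * r ^ n) + 2 * r * (∑' n : ℕ, (n : ℝ) * r ^ n)
        + r * (∑' n : ℕ, r ^ n) := by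
    conv_lhs => rw [Summable.tsum_eq_zero_add hs2]
    have heq : (fun n : ℕ => ((n + 1 : ℕ) : ℝ) ^ 2 * r ^ (n + 1)) =
        fun n : ℕ => r * ((n : ℝ) ^ 2 * r ^ n) + (2 * r * ((n : ℝ) * r ^ n) + r * r ^ n) := by
      funext n; push_cast; ring
    rw [heq, Summable.tsum_add (hs2.mul_left r) ((hs1.mul_left (2*r)).add (hs0.mul_left r)),
      Summable.tsum_add (hs1.mul_left (2*r)) (hs0.mul_left r),
      tsum_mul_left, tsum_mul_left, tsum_mul_left]
    ring
  rw [eq_div_iff (pow_ne_zero 3 hne)]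
  linear_combination (1-r)^2 * key + 2*r*h1' + r*(1-r)*h0'


/-- For `η ∈ (0,1)`, `N > 0`, `L₁ = log₂(1+1/((1−η)N))`, `L₂ = log₂(1+1/N)`,
the variance of `k L₁ − n L₂` under the joint photon-number distribution equals
`(1−η)N((1−η)N+1) L₁² − 2(1−η)N(N+1) L₁L₂ + N(N+1) L₂²`: the first- and second-moment
series converge, and second moment minus square of first moment equals the displayed
expression. -/
theorem reverse_coherent_information_variance (η N : ℝ) (hη : η ∈ Set.Ioo (0 : ℝ) 1)
    (hN : 0 < N) :
    let L₁ : ℝ := Real.logb 2 (1 + 1 / ((1 - η) * N))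
    let L₂ : ℝ := Real.logb 2 (1 + 1 / N)
    let m₁ : ℕ → ℝ := fun n => ∑ k ∈ Finset.range (n + 1),
      jointDist η N n k * ((k : ℝ) * L₁ - (n : ℝ) * L₂)
    let m₂ : ℕ → ℝ := fun n => ∑ k ∈ Finset.range (n + 1),
      jointDist η N n k * ((k : ℝ) * L₁ - (n : ℝ) * L₂) ^ 2
    Summable m₁ ∧ Summable m₂ ∧
      (∑' n, m₂ n) - (∑' n, m₁ n) ^ 2 =
        (1 - η) * N * ((1 - η) * N + 1) * L₁ ^ 2
          - 2 * (1 - η) * N * (N + 1) * L₁ * L₂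
          + N * (N + 1) * L₂ ^ 2 := by
  intro L₁ L₂ m₁ m₂
  obtain ⟨hη0, hη1⟩ := hη
  have hN1 : (0 : ℝ) < N + 1 := by linarith
  have hN1' : (N : ℝ) + 1 ≠ 0 := ne_of_gt hN1
  set r : ℝ := N / (N + 1) with hrdef
  have hr0 : 0 < r := div_pos hN hN1
  have hr1 : r < 1 := by
    rw [hrdef, div_lt_one hN1]; linarith
  have hrabs : |r| < 1 := by rw [abs_of_pos hr0]; exact hr1
  have hrn : ‖r‖ < 1 := by rwa [Real.norm_eq_abs]
  -- the inner-sum identities with x = 1 - η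
  have hηx : (1 : ℝ) - (1 - η) = η := by ring
  have hT0 : ∀ n : ℕ, ∑ k ∈ Finset.range (n + 1),
      (n.choose k : ℝ) * (1 - η) ^ k * η ^ (n - k) = 1 := by
    intro n; have := bern0 (1 - η) n; rwa [hηx] at this
  have hT1 : ∀ n : ℕ, ∑ k ∈ Finset.range (n + 1),
      (k : ℝ) * ((n.choose k : ℝ) * (1 - η) ^ k * η ^ (n - k)) = n * (1 - η) := by
    intro n; have := bern1 (1 - η) n; rwa [hηx] at this
  have hT2 : ∀ n : ℕ, ∑ k ∈ Finset.range (n + 1),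
      (k : ℝ) ^ 2 * ((n.choose k : ℝ) * (1 - η) ^ k * η ^ (n - k))
        = ((n : ℝ) ^ 2 - n) * (1 - η) ^ 2 + n * (1 - η) := by
    intro n; have := bernsq (1 - η) n; rwa [hηx] at this
  -- closed forms for the per-n moments
  have hm1 : ∀ n : ℕ, m₁ n
      = (1 / (N + 1) * ((1 - η) * L₁ - L₂)) * ((n : ℝ) * r ^ n) := by
    intro n
    have e : ∀ k ∈ Finset.range (n + 1),
        jointDist η N n k * ((k : ℝ) * L₁ - (n : ℝ) * L₂)
          = (1 / (N + 1) * r ^ n * L₁)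
              * ((k : ℝ) * ((n.choose k : ℝ) * (1 - η) ^ k * η ^ (n - k)))
            - (1 / (N + 1) * r ^ n * ((n : ℝ) * L₂))
              * ((n.choose k : ℝ) * (1 - η) ^ k * η ^ (n - k)) := by
      intro k _; simp only [jointDist, hrdef]; ring
    show (∑ k ∈ Finset.range (n + 1),
      jointDist η N n k * ((k : ℝ) * L₁ - (n : ℝ) * L₂)) = _
    rw [Finset.sum_congr rfl e, Finset.sum_sub_distrib, ← Finset.mul_sum, ← Finset.mul_sum,
      hT1 n, hT0 n]
    ring
  have hm2 : ∀ n : ℕ, m₂ n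
      = (1 / (N + 1) * ((1 - η) * L₁ - L₂) ^ 2) * ((n : ℝ) ^ 2 * r ^ n)
        + (1 / (N + 1) * ((1 - η) * η * L₁ ^ 2)) * ((n : ℝ) * r ^ n) := by
    intro n
    have e : ∀ k ∈ Finset.range (n + 1),
        jointDist η N n k * ((k : ℝ) * L₁ - (n : ℝ) * L₂) ^ 2
          = (1 / (N + 1) * r ^ n * L₁ ^ 2)
              * ((k : ℝ) ^ 2 * ((n.choose k : ℝ) * (1 - η) ^ k * η ^ (n - k)))
            - (1 / (N + 1) * r ^ n * (2 * (n : ℝ) * L₁ * L₂))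
              * ((k : ℝ) * ((n.choose k : ℝ) * (1 - η) ^ k * η ^ (n - k)))
            + (1 / (N + 1) * r ^ n * ((n : ℝ) ^ 2 * L₂ ^ 2))
              * ((n.choose k : ℝ) * (1 - η) ^ k * η ^ (n - k)) := by
      intro k _; simp only [jointDist, hrdef]; ring
    show (∑ k ∈ Finset.range (n + 1),
      jointDist η N n k * ((k : ℝ) * L₁ - (n : ℝ) * L₂) ^ 2) = _
    rw [Finset.sum_congr rfl e, Finset.sum_add_distrib, Finset.sum_sub_distrib,
      ← Finset.mul_sum, ← Finset.mul_sum, ← Finset.mul_sum, hT2 n, hT1 n, hT0 n]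
    ring
  -- summability of the building blocks
  have hs1 : Summable fun n : ℕ => (n : ℝ) * r ^ n := by
    simpa using summable_pow_mul_geometric_of_norm_lt_one 1 hrn
  have hs2 : Summable fun n : ℕ => (n : ℝ) ^ 2 * r ^ n :=
    summable_pow_mul_geometric_of_norm_lt_one 2 hrn
  have hsm1 : Summable m₁ := by
    apply Summable.congr (hs1.mul_left (1 / (N + 1) * ((1 - η) * L₁ - L₂)))
    intro n; exact (hm1 n).symm
  have hsm2 : Summable m₂ := by
    apply Summable.congr
      ((hs2.mul_left (1 / (N + 1) * ((1 - η) * L₁ - L₂) ^ 2)).add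
        (hs1.mul_left (1 / (N + 1) * ((1 - η) * η * L₁ ^ 2))))
    intro n; exact (hm2 n).symm
  refine ⟨hsm1, hsm2, ?_⟩
  -- values of the geometric-type series
  have htS1 : ∑' n : ℕ, (n : ℝ) * r ^ n = N * (N + 1) := by
    rw [tsum_coe_mul_geometric_of_norm_lt_one hrn, hrdef]
    rw [show (1 : ℝ) - N / (N + 1) = 1 / (N + 1) by field_simp; ring]
    field_simp
  have htS2 : ∑' n : ℕ, (n : ℝ) ^ 2 * r ^ n = N * (N + 1) * (2 * N + 1) := by
    rw [tsum_sq_geom hrabs, hrdef]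
    rw [show (1 : ℝ) - N / (N + 1) = 1 / (N + 1) by field_simp; ring]
    field_simp
    ring
  -- values of the moment series
  have hv1 : ∑' n, m₁ n = ((1 - η) * L₁ - L₂) * N := by
    rw [tsum_congr hm1, tsum_mul_left, htS1]
    field_simp
  have hv2 : ∑' n, m₂ n = ((1 - η) * L₁ - L₂) ^ 2 * (N * (2 * N + 1))
      + (1 - η) * η * L₁ ^ 2 * N := by
    rw [tsum_congr hm2,
      Summable.tsum_add (hs2.mul_left _) (hs1.mul_left _), tsum_mul_left, tsum_mul_left, htS1, htS2]
    field_simp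
  rw [hv1, hv2]
  ring
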